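/- arXiv:0805.2860 — 2 statements merged into one kernel-verified Lean document; each statement's English description precedes it below -/
import Mathlib

section
/- If T is a standard Young tableau with n boxes whose descent set equals {μ_1, μ_1+μ_2, ..., μ_1+⋯+μ_{r-1}} for a partition μ = (μ_1,...,μ_r) of n, then the shape of T dominates μ, i.e., μ(T)_1 + ⋯ + μ(T)_i ≥ μ_1 + ⋯ + μ_i for all i. -/
/-- A standard Young tableau with `n` boxes, encoded by the positions of its entries:
`T j` is the (row, column) position (0-indexed) of the entry `j + 1`. The condition says
that `T` is injective and every initial segment of positions forms a Young diagram
(a downward-closed set of cells); this is equivalent to rows and columns being increasing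
and the image being a Young diagram. -/
def IsSYT (n : ℕ) (T : Fin n → Fin n × Fin n) : Prop :=
  Function.Injective T ∧
    ∀ k i : Fin n, i ≤ k → ∀ p : Fin n × Fin n,
      p.1 ≤ (T i).1 → p.2 ≤ (T i).2 → ∃ j, j ≤ k ∧ T j = p

/-- The row (0-indexed) of the entry `i + 1` of `T`, junk value `0` out of range. -/
def rowOfEntry {n : ℕ} (T : Fin n → Fin n × Fin n) (i : ℕ) : ℕ :=
  if h : i < n then ((T ⟨i, h⟩).1 : ℕ) else 0

/-- The descent set of a standard Young tableau:
`Des(T) = {i ∈ [n-1] : i appears strictly above i + 1 in T}`. -/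
def sytDes {n : ℕ} (T : Fin n → Fin n × Fin n) : Finset ℕ :=
  (Finset.Ico 1 n).filter fun i => rowOfEntry T (i - 1) < rowOfEntry T i

/-- The length of row `r` (0-indexed) of `T`; the function `rowLen T` is the shape of `T`. -/
def rowLen {n : ℕ} (T : Fin n → Fin n × Fin n) (r : ℕ) : ℕ :=
  (Finset.univ.filter fun j : Fin n => ((T j).1 : ℕ) = r).card

/-- `μ : ℕ → ℕ` (parts indexed from `0`) is a partition of `n`. -/
def IsPartitionOf (n : ℕ) (μ : ℕ → ℕ) : Prop :=
  (∀ i j : ℕ, i ≤ j → μ j ≤ μ i) ∧ (∑ i ∈ Finset.range n, μ i = n) ∧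
    ∀ i : ℕ, n ≤ i → μ i = 0

/-- The descent set `{μ_1, μ_1 + μ_2, …, μ_1 + ⋯ + μ_{r-1}}` associated to the partition
`μ` with `r` positive parts (0-indexed: the partial sums `μ_0 + ⋯ + μ_{s-1}` over the
nonempty rows `s ≥ 1`). -/
def desOfShape (n : ℕ) (μ : ℕ → ℕ) : Finset ℕ :=
  ((Finset.Ico 1 n).filter fun s => 0 < μ s).image fun s => ∑ t ∈ Finset.range s, μ t

lemma rowOfEntry_fin {n : ℕ} (T : Fin n → Fin n × Fin n) (j : Fin n) :
    rowOfEntry T (j : ℕ) = ((T j).1 : ℕ) := by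
  simp [rowOfEntry, j.isLt]

/-- If the row increases from `a` to `b`, there is a descent in `(a, b]`. -/
lemma exists_descent {n : ℕ} (T : Fin n → Fin n × Fin n) :
    ∀ b, b < n → ∀ a, a < b → rowOfEntry T a < rowOfEntry T b →
      ∃ d ∈ sytDes T, a < d ∧ d ≤ b := by
  intro b
  induction b with
  | zero => omega
  | succ b ih =>
    intro hb a hab h
    by_cases hdes : rowOfEntry T b < rowOfEntry T (b + 1)
    · exact ⟨b + 1, Finset.mem_filter.2 ⟨Finset.mem_Ico.2 ⟨by omega, hb⟩, by simpa using hdes⟩,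
        by omega, le_rfl⟩
    · rcases Nat.lt_or_ge a b with hab' | hab'
      · obtain ⟨d, hd, had, hdb⟩ := ih (by omega) a hab' (h.trans_le (le_of_not_gt hdes))
        exact ⟨d, hd, had, by omega⟩
      · have hab2 : a = b := by omega
        subst hab2
        exact absurd h hdes

lemma row_le_card_descents {n : ℕ} (T : Fin n → Fin n × Fin n) (hT : IsSYT n T) :
    ∀ j : Fin n, ((T j).1 : ℕ) ≤ ((sytDes T).filter (· ≤ (j : ℕ))).card := by
  have main : ∀ m : ℕ, ∀ j : Fin n, (j : ℕ) ≤ m →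
      ((T j).1 : ℕ) ≤ ((sytDes T).filter (· ≤ (j : ℕ))).card := by
    intro m
    induction m with
    | zero =>
      intro j hj
      -- j = 0; row of first entry is 0
      have hj0 : (j : ℕ) = 0 := by omega
      by_contra hcon
      push_neg at hcon
      have hr : 0 < ((T j).1 : ℕ) := by omega
      -- cell above exists with smaller index, impossible
      have h0 : 0 < n := j.pos
      obtain ⟨j₁, hj₁le, hj₁⟩ := hT.2 j j le_rfl (⟨0, h0⟩, (T j).2)
        (by simp only [Fin.le_def]; omega) le_rfl
      have : j₁ ≠ j := by
        intro h; rw [h] at hj₁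
        have := congrArg (fun p => (p.1 : ℕ)) hj₁
        simp at this; omega
      have : (j₁ : ℕ) < (j : ℕ) := lt_of_le_of_ne hj₁le (by simpa [Fin.ext_iff] using this)
      omega
    | succ m ih =>
      intro j hj
      rcases Nat.lt_or_ge (j : ℕ) (m + 1) with h | h
      · exact ih j (by omega)
      have hjm : (j : ℕ) = m + 1 := by omega
      set r : ℕ := ((T j).1 : ℕ) with hr
      rcases Nat.eq_zero_or_pos r with h0 | h0
      · omega
      have hrn : r - 1 < n := by have := (T j).1.isLt; omega
      obtain ⟨j₁, hj₁le, hj₁⟩ := hT.2 j j le_rfl (⟨r - 1, hrn⟩, (T j).2)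
        (by simp only [Fin.le_def]; omega) le_rfl
      have hrow1 : ((T j₁).1 : ℕ) = r - 1 := by rw [hj₁]
      have hne : j₁ ≠ j := by
        intro h; rw [h] at hrow1; omega
      have hlt : (j₁ : ℕ) < (j : ℕ) := lt_of_le_of_ne hj₁le (by simpa [Fin.ext_iff] using hne)
      obtain ⟨d, hd, hdgt, hdle⟩ := exists_descent T (j : ℕ) j.isLt (j₁ : ℕ) hlt
        (by rw [rowOfEntry_fin, rowOfEntry_fin, hrow1]; omega)
      have hIH : r - 1 ≤ ((sytDes T).filter (· ≤ (j₁ : ℕ))).card := by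
        have := ih j₁ (by omega)
        omega
      have hsub : insert d ((sytDes T).filter (· ≤ (j₁ : ℕ))) ⊆
          (sytDes T).filter (· ≤ (j : ℕ)) := by
        intro x hx
        rcases Finset.mem_insert.1 hx with rfl | hx
        · exact Finset.mem_filter.2 ⟨hd, hdle⟩
        · have := Finset.mem_filter.1 hx
          exact Finset.mem_filter.2 ⟨this.1, le_trans this.2 (le_of_lt hlt)⟩
      have hnotmem : d ∉ (sytDes T).filter (· ≤ (j₁ : ℕ)) := by
        intro hx
        have := (Finset.mem_filter.1 hx).2
        omega
      have := Finset.card_le_card hsub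
      rw [Finset.card_insert_of_notMem hnotmem] at this
      omega
  exact fun j => main (j : ℕ) j le_rfl

/-- If a standard Young tableau `T` with `n` boxes has descent set
`{μ_1, μ_1+μ_2, …, μ_1+⋯+μ_{r-1}}` for a partition `μ` of `n`, then the shape of `T`
dominates `μ`. -/
theorem stmt5 (n : ℕ) (μ : ℕ → ℕ) (hμ : IsPartitionOf n μ)
    (T : Fin n → Fin n × Fin n) (hT : IsSYT n T) (hdes : sytDes T = desOfShape n μ) :
    ∀ i : ℕ, ∑ t ∈ Finset.range i, μ t ≤ ∑ t ∈ Finset.range i, rowLen T t := by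
  intro i
  set S : ℕ → ℕ := fun k => ∑ t ∈ Finset.range k, μ t with hS
  have hSmono : Monotone S := fun a b hab =>
    Finset.sum_le_sum_of_subset (Finset.range_subset_range.2 hab)
  -- S i ≤ n
  have hSn : ∀ k, S k ≤ n := by
    intro k
    rcases le_or_gt k n with h | h
    · calc S k ≤ S n := hSmono h
        _ = n := hμ.2.1
    · have : S k = S n := by
        refine (Finset.sum_subset (Finset.range_subset_range.2 h.le) ?_).symm
        intro x _ hx
        exact hμ.2.2 x (by simpa using hx)
      rw [this]; exact le_of_eq hμ.2.1
  rcases Nat.eq_zero_or_pos (S i) with h0 | h0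
  · simp only [hS] at h0; omega
  have hi0 : 0 < i := by
    rcases Nat.eq_zero_or_pos i with rfl | h; · simp [hS] at h0
    exact h
  -- number of descents ≤ j for j < S i is at most i - 1
  have hcard : ∀ j : ℕ, j < S i → ((sytDes T).filter (· ≤ j)).card ≤ i - 1 := by
    intro j hj
    rw [hdes]
    have hsub : (desOfShape n μ).filter (· ≤ j) ⊆ (Finset.Ico 1 i).image S := by
      intro x hx
      obtain ⟨hx1, hx2⟩ := Finset.mem_filter.1 hx
      obtain ⟨s, hs, rfl⟩ := Finset.mem_image.1 hx1
      obtain ⟨hs1, hs2⟩ := Finset.mem_filter.1 hs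
      have hs1' := Finset.mem_Ico.1 hs1
      have hsi : s < i := by
        by_contra hsi
        push_neg at hsi
        have : S i ≤ S s := hSmono hsi
        simp only [hS] at this hx2 hj
        omega
      exact Finset.mem_image.2 ⟨s, Finset.mem_Ico.2 ⟨hs1'.1, hsi⟩, rfl⟩
    calc ((desOfShape n μ).filter (· ≤ j)).card
        ≤ ((Finset.Ico 1 i).image S).card := Finset.card_le_card hsub
      _ ≤ (Finset.Ico 1 i).card := Finset.card_image_le
      _ = i - 1 := by rw [Nat.card_Ico]
  -- every entry with index < S i lies in a row < i
  have hrow : ∀ j : Fin n, (j : ℕ) < S i → ((T j).1 : ℕ) < i := by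
    intro j hj
    have h1 := row_le_card_descents T hT j
    have h2 := hcard (j : ℕ) hj
    omega
  -- the RHS counts entries in rows < i
  have hRHS : ∑ t ∈ Finset.range i, rowLen T t =
      (Finset.univ.filter fun j : Fin n => ((T j).1 : ℕ) < i).card := by
    rw [Finset.card_eq_sum_card_fiberwise
      (f := fun j : Fin n => ((T j).1 : ℕ)) (t := Finset.range i)
      (fun x hx => Finset.mem_range.2 (Finset.mem_filter.1 hx).2)]
    refine Finset.sum_congr rfl fun b hb => ?_
    have hb' := Finset.mem_range.1 hb
    rw [Finset.filter_filter]
    unfold rowLen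
    congr 1
    apply Finset.filter_congr
    intro x _
    show (((T x).1 : ℕ) = b) ↔ (((T x).1 : ℕ) < i ∧ ((T x).1 : ℕ) = b)
    constructor
    · exact fun h => ⟨by omega, h⟩
    · exact fun h => h.2
  -- the set of indices < S i injects into entries in rows < i
  have hinj : S i ≤ (Finset.univ.filter fun j : Fin n => ((T j).1 : ℕ) < i).card := by
    have hn : 0 < n := lt_of_lt_of_le h0 (hSn i)
    have := Finset.card_le_card_of_injOn
      (f := fun k : ℕ => (⟨min k (n-1), by omega⟩ : Fin n))
      (s := Finset.range (S i))
      (t := Finset.univ.filter fun j : Fin n => ((T j).1 : ℕ) < i)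
      ?_ ?_
    · simpa using this
    · intro k hk
      have hk' := Finset.mem_range.1 hk
      have hkn : k < n := lt_of_lt_of_le hk' (hSn i)
      have : min k (n-1) = k := by omega
      refine Finset.mem_filter.2 ⟨Finset.mem_univ _, ?_⟩
      exact hrow _ (by simp [this]; omega)
    · intro a ha b hb hab
      have ha' := Finset.mem_range.1 ha
      have hb' := Finset.mem_range.1 hb
      have han : a < n := lt_of_lt_of_le ha' (hSn i)
      have hbn : b < n := lt_of_lt_of_le hb' (hSn i)
      simpa [Fin.ext_iff, Nat.min_eq_left (by omega : a ≤ n-1),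
        Nat.min_eq_left (by omega : b ≤ n-1)] using hab
  rw [hRHS.symm] at hinj
  exact hinj
end

section
/- For any k subsets D_1,...,D_k ⊆ [n-1] and any permutation π of {1,...,k}, the number of k-tuples (σ_1,...,σ_k) of permutations in S_n with σ_1⋯σ_k = identity and Des(σ_i) = D_i for all i equals the number of such tuples with Des(σ_i) = D_{π(i)} for all i. -/
def permVal {n : ℕ} (σ : Equiv.Perm (Fin n)) (i : ℕ) : ℕ :=
  if h : i < n then (σ ⟨i, h⟩ : ℕ) else 0

def permDes {n : ℕ} (σ : Equiv.Perm (Fin n)) : Finset ℕ :=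
  (Finset.Ico 1 n).filter fun i => permVal σ i < permVal σ (i - 1)

namespace Stmt11

/-- number of "cuts" of `D` at positions `≤ p` (1-based cuts). -/
def cfun (D : Finset ℕ) (p : ℕ) : ℕ := (D ∩ Finset.Ico 1 (p + 1)).card

lemma cfun_mono (D : Finset ℕ) : Monotone (cfun D) := fun a b hab =>
  Finset.card_le_card (Finset.inter_subset_inter le_rfl (Finset.Ico_subset_Ico le_rfl (by omega)))

lemma cfun_succ_of_not_mem {D : Finset ℕ} {p : ℕ} (h : p + 1 ∉ D) :
    cfun D (p + 1) = cfun D p := by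
  unfold cfun
  congr 1
  ext a
  simp only [Finset.mem_inter, Finset.mem_Ico]
  constructor
  · rintro ⟨ha, h1, h2⟩
    have : a ≠ p + 1 := fun e => h (e ▸ ha)
    exact ⟨ha, h1, by omega⟩
  · rintro ⟨ha, h1, h2⟩
    exact ⟨ha, h1, by omega⟩

lemma cfun_eq_no_mem {D : Finset ℕ} {x y i : ℕ} (hxy : x ≤ y) (h : cfun D x = cfun D y)
    (hi : i ∈ D) (h1 : x < i) (h2 : i ≤ y) : False := by
  have hsub : D ∩ Finset.Ico 1 (x + 1) ⊆ D ∩ Finset.Ico 1 (y + 1) :=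
    Finset.inter_subset_inter le_rfl (Finset.Ico_subset_Ico le_rfl (by omega))
  have hmem : i ∈ D ∩ Finset.Ico 1 (y + 1) := by
    simp only [Finset.mem_inter, Finset.mem_Ico]; exact ⟨hi, by omega, by omega⟩
  have hnot : i ∉ D ∩ Finset.Ico 1 (x + 1) := by
    simp only [Finset.mem_inter, Finset.mem_Ico]; push_neg; intro _; omega
  have := Finset.card_lt_card ((Finset.ssubset_iff_of_subset hsub).2 ⟨i, hmem, hnot⟩)
  unfold cfun at h; omega

lemma permVal_coe {n : ℕ} (σ : Equiv.Perm (Fin n)) (x : Fin n) :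
    permVal σ (x : ℕ) = (σ x : ℕ) := by
  rw [permVal, dif_pos x.isLt]

/-- Key characterization: `Des σ ⊆ D` iff `σ` is strictly increasing on `D`-blocks. -/
lemma permDes_subset_iff {n : ℕ} (σ : Equiv.Perm (Fin n)) (D : Finset ℕ) :
    permDes σ ⊆ D ↔ ∀ p q : Fin n, p < q → cfun D p = cfun D q → σ p < σ q := by
  constructor
  · intro hD
    have step : ∀ p q : Fin n, (q : ℕ) = p + 1 → cfun D p = cfun D q → σ p < σ q := by
      intro p q hq hc
      have hqD : (q : ℕ) ∉ D := fun hmem =>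
        cfun_eq_no_mem (by omega) hc hmem (by omega) (le_refl _)
      have hq1 : (q : ℕ) ∈ Finset.Ico 1 n := Finset.mem_Ico.2 ⟨by omega, q.isLt⟩
      have hnd : (q : ℕ) ∉ permDes σ := fun hd => hqD (hD hd)
      rw [permDes, Finset.mem_filter] at hnd
      push_neg at hnd
      have hnlt := hnd hq1
      have e1 : permVal σ (q : ℕ) = (σ q : ℕ) := permVal_coe σ q
      have e2 : permVal σ ((q : ℕ) - 1) = (σ p : ℕ) := by
        have : (q : ℕ) - 1 = (p : ℕ) := by omega
        rw [this]; exact permVal_coe σ p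
      rw [e1, e2] at hnlt
      have hne : σ p ≠ σ q := fun e => by
        have := σ.injective e
        have : (p : ℕ) = q := congrArg Fin.val this
        omega
      have : (σ p : ℕ) ≤ (σ q : ℕ) := by omega
      exact lt_of_le_of_ne (by exact_mod_cast this) hne
    have aux : ∀ m, ∀ p q : Fin n, (q : ℕ) = p + m + 1 → cfun D p = cfun D q → σ p < σ q := by
      intro m
      induction m with
      | zero => exact fun p q h1 h2 => step p q (by omega) h2
      | succ m ih =>
        intro p q h1 h2
        have hrn : (p : ℕ) + m + 1 < n := by have := q.isLt; omega
        set r : Fin n := ⟨(p : ℕ) + m + 1, hrn⟩ with hr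
        have hle1 : cfun D p ≤ cfun D r := cfun_mono D (by simp [hr]; omega)
        have hle2 : cfun D (r : ℕ) ≤ cfun D q := cfun_mono D (by simp [hr]; omega)
        have hcr : cfun D p = cfun D r := by omega
        have hcr2 : cfun D (r : ℕ) = cfun D q := by omega
        exact (ih p r rfl hcr).trans (step r q (by simp [hr]; omega) hcr2)
    intro p q hpq hc
    have hlt : (p : ℕ) < q := hpq
    exact aux ((q : ℕ) - p - 1) p q (by omega) hc
  · intro h i hi
    rw [permDes, Finset.mem_filter] at hi
    obtain ⟨hi1, hi2⟩ := hi
    rw [Finset.mem_Ico] at hi1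
    by_contra hiD
    set p : Fin n := ⟨i - 1, by omega⟩ with hp
    set q : Fin n := ⟨i, hi1.2⟩ with hq2
    have hc : cfun D (p : ℕ) = cfun D (q : ℕ) := by
      have : (i - 1) + 1 = i := by omega
      have h3 : cfun D ((i - 1) + 1) = cfun D (i - 1) := cfun_succ_of_not_mem (by rwa [this])
      show cfun D (i-1) = cfun D i
      rw [this] at h3
      exact h3.symm
    have hσ := h p q (by simp [hp, hq2]; omega) hc
    have e1 : permVal σ i = (σ q : ℕ) := by
      have := permVal_coe σ q; simpa [hq2] using this
    have e2 : permVal σ (i - 1) = (σ p : ℕ) := by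
      have := permVal_coe σ p; simpa [hp] using this
    rw [e1, e2] at hi2
    have : (σ p : ℕ) < (σ q : ℕ) := hσ
    omega
  
variable {n k : ℕ}

lemma univ_val_map_eq_ofFn {α : Type*} (f : Fin n → α) :
    Multiset.map f Finset.univ.val = ((List.ofFn f : List α) : Multiset α) := by
  rw [List.ofFn_eq_map]; rfl

lemma perm_unique {a b : Equiv.Perm (Fin n)} (h : ∀ x y, a x < a y ↔ b x < b y) : a = b := by
  have hs : StrictMono fun z => b (a.symm z) := by
    intro z w hzw
    exact (h (a.symm z) (a.symm w)).1 (by simpa using hzw)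
  have hr : Set.range (fun z => b (a.symm z)) = Set.range (id : Fin n → Fin n) := by
    rw [Set.range_id]
    exact Set.range_eq_univ.2 fun y => ⟨a (b.symm y), by simp⟩
  have := (StrictMono.range_inj hs strictMono_id).1 hr
  ext x
  have h2 := congrFun this (a x)
  simp only [Equiv.symm_apply_apply, id_eq] at h2
  exact (congrArg Fin.val h2).symm

lemma exists_rank {α : Type*} [LinearOrder α] {w : Fin n → α} (hw : Function.Injective w) :
    ∃ r : Equiv.Perm (Fin n), ∀ x y, w x < w y ↔ r x < r y := by
  classical
  set s := Finset.univ.image w with hs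
  have hcard : s.card = n := by
    rw [hs, Finset.card_image_of_injective _ hw, Finset.card_univ, Fintype.card_fin]
  let e := Finset.orderIsoOfFin s hcard
  let f : Fin n → Fin n := fun x => e.symm ⟨w x, by simp [hs]⟩
  have hf : ∀ x y, w x < w y ↔ f x < f y := by
    intro x y
    simp only [f]
    rw [e.symm.lt_iff_lt]
    exact Iff.rfl.symm.trans (by rw [Subtype.mk_lt_mk])
  have hinj : Function.Injective f := by
    intro x y hxy
    have := e.symm.injective hxy
    exact hw (Subtype.mk_eq_mk.1 this)
  exact ⟨Equiv.ofBijective f (Finite.injective_iff_bijective.1 hinj), fun x y => hf x y⟩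

lemma monotone_unique {α : Type*} [LinearOrder α] {f g : Fin n → α} (hf : Monotone f)
    (hg : Monotone g) (h : Multiset.map f Finset.univ.val = Multiset.map g Finset.univ.val) :
    f = g := by
  have e1 : (Multiset.map f Finset.univ.val) = ((List.ofFn f : List α) : Multiset α) := univ_val_map_eq_ofFn f
  have e2 : (Multiset.map g Finset.univ.val) = ((List.ofFn g : List α) : Multiset α) := univ_val_map_eq_ofFn g
  have h1 : ((List.ofFn f : List α) : Multiset α) = ((List.ofFn g : List α) : Multiset α) := by
    rw [← e1, ← e2, h]
  have hp : List.Perm (List.ofFn f) (List.ofFn g) := Multiset.coe_eq_coe.1 h1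
  have heq := hp.eq_of_sortedLE hf.sortedLE_ofFn hg.sortedLE_ofFn
  exact List.ofFn_injective heq

/-- `Des (a * b⁻¹) ⊆ D` characterized as an order condition relating `b` and `a`. -/
lemma des_iff_order (a b : Equiv.Perm (Fin n)) (D : Finset ℕ) :
    permDes (a * b⁻¹) ⊆ D ↔ ∀ x y, b x < b y ↔
      (cfun D (b x) < cfun D (b y) ∨ (cfun D (b x) = cfun D (b y) ∧ a x < a y)) := by
  rw [permDes_subset_iff]
  have happ : ∀ z, (a * b⁻¹) (b z) = a z := by intro z; simp
  constructor
  · intro h x y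
    constructor
    · intro hxy
      rcases lt_trichotomy (cfun D (b x : ℕ)) (cfun D (b y : ℕ)) with h1 | h1 | h1
      · exact Or.inl h1
      · refine Or.inr ⟨h1, ?_⟩
        have := h (b x) (b y) hxy h1
        rwa [happ, happ] at this
      · exact absurd (cfun_mono D (le_of_lt hxy)) (by omega)
    · rintro (h1 | ⟨h1, h2⟩)
      · by_contra hn
        have : b y ≤ b x := not_lt.1 hn
        exact absurd (cfun_mono D this) (by omega)
      · rcases lt_trichotomy (b x) (b y) with h3 | h3 | h3
        · exact h3
        · have : x = y := b.injective h3
          subst this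
          exact absurd h2 (lt_irrefl _)
        · have := h (b y) (b x) h3 h1.symm
          rw [happ, happ] at this
          exact absurd h2 (by omega)
  · intro h p q hpq hc
    have := (h (b⁻¹ p) (b⁻¹ q))
    simp only [Equiv.Perm.coe_inv, Equiv.apply_symm_apply] at this
    rcases this.1 hpq with h1 | ⟨h1, h2⟩
    · omega
    · show (a * b⁻¹) p < (a * b⁻¹) q
      simpa using h2

/-- Reverse-lexicographic comparison of the first `i` labels, with tiebreak `x < y`. -/
def Plex (v : Fin n → ℕ → ℕ) (i : ℕ) (x y : Fin n) : Prop :=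
  (∃ j, j < i ∧ v x j < v y j ∧ ∀ j', j < j' → j' < i → v x j' = v y j') ∨
    ((∀ j, j < i → v x j = v y j) ∧ x < y)

lemma plex_succ (v : Fin n → ℕ → ℕ) (i : ℕ) (x y : Fin n) :
    Plex v (i + 1) x y ↔ (v x i < v y i ∨ (v x i = v y i ∧ Plex v i x y)) := by
  constructor
  · rintro (⟨j, hj, hlt, heq⟩ | ⟨heq, hxy⟩)
    · rcases eq_or_lt_of_le (Nat.lt_succ_iff.1 hj) with rfl | hj'
      · exact Or.inl hlt
      · exact Or.inr ⟨heq i hj' (by omega),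
          Or.inl ⟨j, hj', hlt, fun j' h1 h2 => heq j' h1 (by omega)⟩⟩
    · exact Or.inr ⟨heq i (by omega), Or.inr ⟨fun j hj => heq j (by omega), hxy⟩⟩
  · rintro (h | ⟨he, ⟨j, hj, hlt, heq⟩ | ⟨heq, hxy⟩⟩)
    · exact Or.inl ⟨i, by omega, h, fun j' h1 h2 => (by omega : False).elim⟩
    · refine Or.inl ⟨j, by omega, hlt, fun j' h1 h2 => ?_⟩
      rcases (by omega : j' < i ∨ j' = i) with h3 | h3
      · exact heq j' h1 h3
      · rw [h3]; exact he
    · refine Or.inr ⟨fun j hj => ?_, hxy⟩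
      rcases (by omega : j < i ∨ j = i) with h3 | h3
      · exact heq j h3
      · rw [h3]; exact he

lemma order_unroll (v : Fin n → ℕ → ℕ) (t : ℕ → Equiv.Perm (Fin n)) (h0 : t 0 = 1)
    (hstep : ∀ i, i < k → ∀ x y : Fin n,
      t (i + 1) x < t (i + 1) y ↔ (v x i < v y i ∨ (v x i = v y i ∧ t i x < t i y))) :
    ∀ i, i ≤ k → ∀ x y, (t i x < t i y ↔ Plex v i x y) := by
  intro i
  induction i with
  | zero =>
    intro _ x y
    rw [h0]
    simp only [Equiv.Perm.one_apply, Plex]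
    constructor
    · intro hxy
      exact Or.inr ⟨fun j hj => (by omega : False).elim, hxy⟩
    · rintro (⟨j, hj, _⟩ | ⟨_, hxy⟩)
      · omega
      · exact hxy
  | succ i ih =>
    intro hik x y
    rw [hstep i (by omega) x y, plex_succ]
    exact or_congr Iff.rfl (and_congr Iff.rfl (ih (by omega) x y))

noncomputable def keyOrd (k : ℕ) : LinearOrder (Lex (Fin k → ℕ)) := by
  have h : WellFoundedLT (Fin k) := inferInstance
  exact @Pi.Lex.linearOrder (Fin k) (fun _ => ℕ) Fin.instLinearOrder h
    (fun _ => inferInstance)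

attribute [instance] keyOrd

/-- Reverse-lex key of a label vector. -/
def key {k : ℕ} (a : Fin k → ℕ) : Lex (Fin k → ℕ) := toLex (a ∘ Fin.rev)

lemma key_lt_iff {a b : Fin k → ℕ} :
    key a < key b ↔ ∃ j : Fin k, a j < b j ∧ ∀ j', j < j' → a j' = b j' := by
  show (∃ i : Fin k, (∀ j, j < i → (a ∘ Fin.rev) j = (b ∘ Fin.rev) j) ∧
      (a ∘ Fin.rev) i < (b ∘ Fin.rev) i) ↔ _
  constructor
  · rintro ⟨i, he, hl⟩
    refine ⟨i.rev, hl, fun j' hj' => ?_⟩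
    have h1 : j'.rev < i := by
      conv_rhs => rw [← Fin.rev_rev i]
      exact Fin.rev_lt_rev.mpr hj'
    have := he j'.rev h1
    simpa [Fin.rev_rev] using this
  · rintro ⟨j, hl, he⟩
    refine ⟨j.rev, fun j0 hj0 => ?_, by simpa [Fin.rev_rev] using hl⟩
    have h1 : j < j0.rev := by
      rw [← Fin.rev_rev j0] at hj0
      rwa [Fin.rev_lt_rev] at hj0
    exact he j0.rev h1

lemma key_inj {a b : Fin k → ℕ} (h : key a = key b) : a = b := by
  have h1 : a ∘ Fin.rev = b ∘ Fin.rev := h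
  funext j
  have := congrFun h1 j.rev
  simpa [Fin.rev_rev] using this

lemma plex_iff_key {vN : Fin n → ℕ → ℕ} {v : Fin n → Fin k → ℕ}
    (hcomp : ∀ x (i : Fin k), v x i = vN x (i : ℕ)) (x y : Fin n) :
    Plex vN k x y ↔ (key (v x) < key (v y) ∨ (v x = v y ∧ x < y)) := by
  rw [key_lt_iff]
  constructor
  · rintro (⟨j, hj, hlt, he⟩ | ⟨he, hxy⟩)
    · refine Or.inl ⟨⟨j, hj⟩, ?_, fun j' hj' => ?_⟩
      · rw [hcomp, hcomp]; exact hlt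
      · rw [hcomp, hcomp]; exact he j' hj' j'.isLt
    · refine Or.inr ⟨funext fun i => ?_, hxy⟩
      rw [hcomp, hcomp]; exact he i i.isLt
  · rintro (⟨j, hlt, he⟩ | ⟨he, hxy⟩)
    · refine Or.inl ⟨j, j.isLt, ?_, fun j' h1 h2 => ?_⟩
      · rw [← hcomp, ← hcomp]; exact hlt
      · have := he ⟨j', h2⟩ (by rw [Fin.lt_def]; exact h1)
        rw [hcomp, hcomp] at this
        exact this
    · refine Or.inr ⟨fun jn hjn => ?_, hxy⟩
      have := congrFun he ⟨jn, hjn⟩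
      rw [hcomp, hcomp] at this
      exact this

lemma plex_iff_lt {vN : Fin n → ℕ → ℕ} {v : Fin n → Fin k → ℕ}
    (hcomp : ∀ x (i : Fin k), v x i = vN x (i : ℕ))
    (hv : Monotone fun x => key (v x)) (x y : Fin n) :
    Plex vN k x y ↔ x < y := by
  rw [plex_iff_key hcomp]
  constructor
  · rintro (h | ⟨he, h⟩)
    · by_contra hxy
      exact absurd h (hv (le_of_not_gt hxy)).not_gt
    · exact h
  · intro hxy
    rcases lt_or_eq_of_le (hv hxy.le) with h | h
    · exact Or.inl h
    · exact Or.inr ⟨key_inj h, hxy⟩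

lemma map_univ_perm {β : Type*} (e : Equiv.Perm (Fin n)) (f : Fin n → β) :
    Multiset.map (fun x => f (e x)) Finset.univ.val = Multiset.map f Finset.univ.val := by
  conv_rhs => rw [← Finset.map_univ_equiv e]
  rw [Finset.map_val, Multiset.map_map]
  rfl

noncomputable def sortEnum {α : Type*} [LinearOrder α] (M : Multiset α)
    (h : Multiset.card M = n) : Fin n → α :=
  fun p => (M.sort (· ≤ ·)).get (Fin.cast (by rw [Multiset.length_sort, h]) p)

lemma sortEnum_monotone {α : Type*} [LinearOrder α] (M : Multiset α)
    (h : Multiset.card M = n) : Monotone (sortEnum M h) := by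
  intro p q hpq
  rcases eq_or_lt_of_le hpq with rfl | hlt
  · exact le_refl _
  · exact List.Pairwise.rel_get_of_lt (Multiset.pairwise_sort M _) (by simpa using hlt)

lemma sortEnum_map {α : Type*} [LinearOrder α] (M : Multiset α) (h : Multiset.card M = n) :
    Multiset.map (sortEnum M h) Finset.univ.val = M := by
  rw [univ_val_map_eq_ofFn]
  have : List.ofFn (sortEnum M h) = M.sort (· ≤ ·) := by
    apply List.ext_getElem
    · simp [Multiset.length_sort, h]
    · intro i h1 h2
      simp only [List.getElem_ofFn]
      rfl
  rw [this, Multiset.sort_eq]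

lemma vec_unique {v w : Fin n → Fin k → ℕ} (hv : Monotone fun x => key (v x))
    (hw : Monotone fun x => key (w x))
    (h : Multiset.map v Finset.univ.val = Multiset.map w Finset.univ.val) : v = w := by
  have h2 : Multiset.map (fun x => key (v x)) Finset.univ.val
      = Multiset.map (fun x => key (w x)) Finset.univ.val := by
    have e1 : Multiset.map (fun x => key (v x)) Finset.univ.val
        = Multiset.map key (Multiset.map v Finset.univ.val) := by rw [Multiset.map_map]; rfl
    have e2 : Multiset.map (fun x => key (w x)) Finset.univ.val
        = Multiset.map key (Multiset.map w Finset.univ.val) := by rw [Multiset.map_map]; rfl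
    rw [e1, e2, h]
  have := monotone_unique (α := Lex (Fin k → ℕ)) hv hw h2
  funext x
  exact key_inj (congrFun this x)


noncomputable def fcount (n k : ℕ) (E : Fin k → Finset ℕ) : ℕ :=
  Nat.card {σ : Fin k → Equiv.Perm (Fin n) //
    (List.ofFn σ).prod = 1 ∧ ∀ i, permDes (σ i) ⊆ E i}

noncomputable def vcount (n k : ℕ) (E : Fin k → Finset ℕ) : ℕ :=
  Nat.card {v : Fin n → Fin k → ℕ //
    (∀ i : Fin k, Multiset.map (fun x => v x i) Finset.univ.val
        = Multiset.map (fun p : Fin n => cfun (E i) (p : ℕ)) Finset.univ.val) ∧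
      Monotone fun x => key (v x)}

/-- partial products from the right -/
def tf (σ : Fin k → Equiv.Perm (Fin n)) (i : ℕ) : Equiv.Perm (Fin n) :=
  ((List.ofFn σ).drop i).prod

lemma tf_k (σ : Fin k → Equiv.Perm (Fin n)) : tf σ k = 1 := by
  show ((List.ofFn σ).drop k).prod = 1
  rw [List.drop_eq_nil_of_le (by simp), List.prod_nil]

lemma tf_step (σ : Fin k → Equiv.Perm (Fin n)) (i : ℕ) (h : i < k) :
    tf σ i = σ ⟨i, h⟩ * tf σ (i + 1) := by
  show ((List.ofFn σ).drop i).prod = _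
  rw [List.drop_eq_getElem_cons (by simpa using h), List.prod_cons, List.getElem_ofFn]
  rfl

lemma sigma_eq (σ : Fin k → Equiv.Perm (Fin n)) (i : ℕ) (h : i < k) :
    σ ⟨i, h⟩ = tf σ i * (tf σ (i + 1))⁻¹ := by
  rw [tf_step σ i h]; group

lemma tf_zero {σ : Fin k → Equiv.Perm (Fin n)} (h : (List.ofFn σ).prod = 1) : tf σ 0 = 1 := by
  show ((List.ofFn σ).drop 0).prod = 1
  rwa [List.drop_zero]

section MainBij

variable (E : Fin k → Finset ℕ)

/-- the label functions, with junk `∅` beyond `k` -/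
def Dex (i : ℕ) : Finset ℕ := if h : i < k then E ⟨i, h⟩ else ∅

def vN (σ : Fin k → Equiv.Perm (Fin n)) (x : Fin n) (i : ℕ) : ℕ :=
  cfun (Dex E i) ((tf σ (i + 1) x : Fin n) : ℕ)

def vF (σ : Fin k → Equiv.Perm (Fin n)) (x : Fin n) (i : Fin k) : ℕ :=
  cfun (E i) ((tf σ ((i : ℕ) + 1) x : Fin n) : ℕ)

lemma vF_comp (σ : Fin k → Equiv.Perm (Fin n)) (x : Fin n) (i : Fin k) :
    vF E σ x i = vN E σ x (i : ℕ) := by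
  simp [vF, vN, Dex, dif_pos i.isLt]

lemma hOrd {σ : Fin k → Equiv.Perm (Fin n)}
    (hσ : (List.ofFn σ).prod = 1 ∧ ∀ i, permDes (σ i) ⊆ E i) (i : ℕ) (h : i < k)
    (x y : Fin n) : tf σ (i + 1) x < tf σ (i + 1) y ↔
      (vN E σ x i < vN E σ y i ∨ (vN E σ x i = vN E σ y i ∧ tf σ i x < tf σ i y)) := by
  have hdes : permDes (tf σ i * (tf σ (i + 1))⁻¹) ⊆ E ⟨i, h⟩ := by
    rw [← sigma_eq σ i h]; exact hσ.2 ⟨i, h⟩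
  have h2 := (des_iff_order (tf σ i) (tf σ (i + 1)) (E ⟨i, h⟩)).1 hdes x y
  have hd : Dex E i = E ⟨i, h⟩ := dif_pos h
  simpa [vN, hd] using h2

lemma hunroll {σ : Fin k → Equiv.Perm (Fin n)}
    (hσ : (List.ofFn σ).prod = 1 ∧ ∀ i, permDes (σ i) ⊆ E i) (x y : Fin n) :
    x < y ↔ Plex (vN E σ) k x y := by
  have h := order_unroll (vN E σ) (tf σ) (tf_zero hσ.1)
    (fun i hik x y => hOrd E hσ i hik x y) k le_rfl x y
  rw [tf_k σ] at h
  simpa using h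

lemma marg_thm {σ : Fin k → Equiv.Perm (Fin n)} (i : Fin k) :
    Multiset.map (fun x => vF E σ x i) Finset.univ.val
      = Multiset.map (fun p : Fin n => cfun (E i) (p : ℕ)) Finset.univ.val :=
  map_univ_perm (tf σ ((i : ℕ) + 1)) (fun p : Fin n => cfun (E i) (p : ℕ))

lemma mono_thm {σ : Fin k → Equiv.Perm (Fin n)}
    (hσ : (List.ofFn σ).prod = 1 ∧ ∀ i, permDes (σ i) ⊆ E i) :
    Monotone fun x => key (vF E σ x) := by
  intro x y hxy
  rcases eq_or_lt_of_le hxy with rfl | hlt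
  · exact le_refl _
  · have hp : Plex (vN E σ) k x y := (hunroll E hσ x y).1 hlt
    rcases (plex_iff_key (vF_comp E σ) x y).1 hp with h | ⟨h, _⟩
    · exact le_of_lt h
    · exact le_of_eq (congrArg key h)

lemma card_subset_eq : fcount n k E = vcount n k E := by
  classical
  apply Nat.card_congr
  refine Equiv.ofBijective
    (fun σp => ⟨vF E σp.1, fun i => marg_thm E i, mono_thm E σp.2⟩) ⟨?_, ?_⟩
  -- injectivity
  · rintro ⟨σ, hσ⟩ ⟨τ, hτ⟩ h
    have hv : vF E σ = vF E τ := congrArg Subtype.val h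
    have hvN : vN E σ = vN E τ := by
      funext x i
      by_cases hik : i < k
      · have h2 := congrFun (congrFun hv x) ⟨i, hik⟩
        rw [vF_comp E σ, vF_comp E τ] at h2
        exact h2
      · simp [vN, Dex, hik, cfun]
    have htf : ∀ i, i ≤ k → tf σ i = tf τ i := by
      intro i
      induction i with
      | zero => intro _; rw [tf_zero hσ.1, tf_zero hτ.1]
      | succ i ih =>
        intro hik
        have hi : i < k := hik
        apply perm_unique
        intro x y
        rw [hOrd E hσ i hi x y, hOrd E hτ i hi x y, hvN, ih (le_of_lt hi)]
    apply Subtype.ext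
    funext i
    have e1 : σ i = tf σ (i : ℕ) * (tf σ ((i : ℕ) + 1))⁻¹ := by
      have := sigma_eq σ (i : ℕ) i.isLt
      simpa using this
    have e2 : τ i = tf τ (i : ℕ) * (tf τ ((i : ℕ) + 1))⁻¹ := by
      have := sigma_eq τ (i : ℕ) i.isLt
      simpa using this
    show σ i = τ i
    rw [e1, e2, htf (i : ℕ) (le_of_lt i.isLt), htf ((i : ℕ) + 1) i.isLt]
  -- surjectivity
  · rintro ⟨v, hmarg, hmono⟩
    set vN0 : Fin n → ℕ → ℕ := fun x i => if h : i < k then v x ⟨i, h⟩ else 0 with hvN0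
    have hcomp0 : ∀ (x : Fin n) (i : Fin k), v x i = vN0 x (i : ℕ) := by
      intro x i; simp [hvN0, dif_pos i.isLt]
    have winj : ∀ (i : ℕ) (ti : Equiv.Perm (Fin n)),
        Function.Injective (fun x => (toLex (vN0 x i, ti x) : Lex (ℕ × Fin n))) := by
      intro i ti x y hxy
      have h1 : (vN0 x i, ti x) = (vN0 y i, ti y) := congrArg ofLex hxy
      exact ti.injective (congrArg Prod.snd h1)
    set t : ℕ → Equiv.Perm (Fin n) :=
      fun i => Nat.rec 1 (fun j tj => Classical.choose (exists_rank (winj j tj))) i with ht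
    have hrank : ∀ (i : ℕ) (x y : Fin n), t (i + 1) x < t (i + 1) y ↔
        (vN0 x i < vN0 y i ∨ (vN0 x i = vN0 y i ∧ t i x < t i y)) := by
      intro i x y
      have hspec := Classical.choose_spec (exists_rank (winj i (t i))) x y
      have he : t (i + 1) = Classical.choose (exists_rank (winj i (t i))) := rfl
      rw [he, ← hspec]
      exact Prod.Lex.lt_iff
    have htk_ord : ∀ x y : Fin n, t k x < t k y ↔ x < y := by
      intro x y
      rw [order_unroll vN0 t rfl (fun i _ x y => hrank i x y) k le_rfl x y]
      exact plex_iff_lt hcomp0 hmono x y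
    have htk : t k = 1 := by
      apply perm_unique
      intro x y
      rw [htk_ord x y]
      simp
    have claimR : ∀ (i : ℕ) (h : i < k) (x : Fin n),
        cfun (E ⟨i, h⟩) ((t (i + 1) x : Fin n) : ℕ) = vN0 x i := by
      intro i h
      set b := t (i + 1) with hb
      have g1mono : Monotone fun p : Fin n => vN0 (b.symm p) i := by
        intro p q hpq
        rcases eq_or_lt_of_le hpq with rfl | hlt
        · exact le_refl _
        · have hbb : b (b.symm p) < b (b.symm q) := by simpa using hlt
          rcases (hrank i _ _).1 hbb with h1 | ⟨h1, _⟩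
          · exact le_of_lt h1
          · exact le_of_eq h1
      have g2mono : Monotone fun p : Fin n => cfun (E ⟨i, h⟩) (p : ℕ) := by
        intro p q hpq
        exact cfun_mono _ (by exact_mod_cast hpq)
      have hmaps : Multiset.map (fun p : Fin n => vN0 (b.symm p) i) Finset.univ.val
          = Multiset.map (fun p : Fin n => cfun (E ⟨i, h⟩) (p : ℕ)) Finset.univ.val := by
        rw [map_univ_perm b.symm (fun x => vN0 x i)]
        have : (fun x : Fin n => vN0 x i) = fun x : Fin n => v x ⟨i, h⟩ := by
          funext x; exact (hcomp0 x ⟨i, h⟩).symm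
        rw [this]
        exact hmarg ⟨i, h⟩
      have heq := monotone_unique g1mono g2mono hmaps
      intro x
      have h2 := congrFun heq (b x)
      simp only [Equiv.symm_apply_apply] at h2
      exact h2.symm
    set σ0 : Fin k → Equiv.Perm (Fin n) := fun i => t (i : ℕ) * (t ((i : ℕ) + 1))⁻¹ with hσ0
    have haux : ∀ m j, j + m = k → ((List.ofFn σ0).drop j).prod = t j * (t k)⁻¹ := by
      intro m
      induction m with
      | zero =>
        intro j hj
        have : j = k := by omega
        subst this
        rw [List.drop_eq_nil_of_le (by simp), List.prod_nil]
        simp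
      | succ m ih =>
        intro j hj
        have hjk : j < k := by omega
        rw [List.drop_eq_getElem_cons (by simpa using hjk), List.prod_cons, List.getElem_ofFn,
          ih (j + 1) (by omega)]
        show σ0 ⟨j, hjk⟩ * _ = _
        rw [hσ0]
        group
    have hprod : (List.ofFn σ0).prod = 1 := by
      have h2 : (List.ofFn σ0).prod = t 0 * (t k)⁻¹ := by
        have := haux k 0 (by omega)
        rwa [List.drop_zero] at this
      rw [h2, htk]
      show (1 : Equiv.Perm (Fin n)) * (1 : Equiv.Perm (Fin n))⁻¹ = 1
      group
    have hdes : ∀ i : Fin k, permDes (σ0 i) ⊆ E i := by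
      intro i
      have h := i.isLt
      have hcR : ∀ z : Fin n, cfun (E i) ((t ((i : ℕ) + 1) z : Fin n) : ℕ) = vN0 z (i : ℕ) := by
        intro z
        have := claimR (i : ℕ) h z
        simpa using this
      have := (des_iff_order (t (i : ℕ)) (t ((i : ℕ) + 1)) (E i)).2 ?_
      · exact this
      intro x y
      rw [hcR x, hcR y]
      exact hrank (i : ℕ) x y
    have htf0 : ∀ j, j ≤ k → tf σ0 j = t j := by
      intro j hj
      have h2 := haux (k - j) j (by omega)
      rw [htk] at h2
      show ((List.ofFn σ0).drop j).prod = t j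
      rw [h2]
      group
    refine ⟨⟨σ0, hprod, hdes⟩, ?_⟩
    apply Subtype.ext
    show vF E σ0 = v
    funext x i
    show cfun (E i) ((tf σ0 ((i : ℕ) + 1) x : Fin n) : ℕ) = v x i
    rw [htf0 ((i : ℕ) + 1) i.isLt]
    have h2 := claimR (i : ℕ) i.isLt x
    simp only [Fin.eta] at h2
    rw [h2]
    exact (hcomp0 x i).symm

end MainBij

lemma key_unrev (g : Lex (Fin k → ℕ)) : key (ofLex g ∘ Fin.rev) = g := by
  show toLex ((ofLex g ∘ Fin.rev) ∘ Fin.rev) = g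
  have h : (ofLex g ∘ Fin.rev) ∘ Fin.rev = ofLex g := by
    funext j
    simp [Function.comp, Fin.rev_rev]
  rw [h]
  rfl

lemma card_keymap (f : Fin n → Fin k → ℕ) :
    Multiset.card (Multiset.map (fun y => key (f y)) Finset.univ.val) = n := by
  simp

noncomputable def resort (f : Fin n → Fin k → ℕ) : Fin n → Fin k → ℕ :=
  fun x => ofLex (sortEnum (Multiset.map (fun y => key (f y)) Finset.univ.val)
    (card_keymap f) x) ∘ Fin.rev

lemma key_resort (f : Fin n → Fin k → ℕ) :
    (fun x => key (resort f x))
      = sortEnum (Multiset.map (fun y => key (f y)) Finset.univ.val) (card_keymap f) :=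
  funext fun x => key_unrev _

lemma resort_mono (f : Fin n → Fin k → ℕ) : Monotone fun x => key (resort f x) := by
  rw [key_resort]
  exact sortEnum_monotone _ _

lemma resort_map (f : Fin n → Fin k → ℕ) :
    Multiset.map (resort f) Finset.univ.val = Multiset.map f Finset.univ.val := by
  have hkeyinj : Function.Injective (key (k := k)) := fun a b h => key_inj h
  apply Multiset.map_injective hkeyinj
  rw [Multiset.map_map, Multiset.map_map]
  have h1 : (key ∘ resort f) = sortEnum (Multiset.map (fun y => key (f y)) Finset.univ.val)
      (card_keymap f) := key_resort f
  rw [h1, sortEnum_map]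
  rfl

lemma marg_of_map_eq {F G : Fin n → Fin k → ℕ}
    (h : Multiset.map F Finset.univ.val = Multiset.map G Finset.univ.val) (i : Fin k) :
    Multiset.map (fun x => F x i) Finset.univ.val
      = Multiset.map (fun x => G x i) Finset.univ.val := by
  have := congrArg (Multiset.map (fun a : Fin k → ℕ => a i)) h
  rwa [Multiset.map_map, Multiset.map_map] at this

lemma precomp_inj (π : Equiv.Perm (Fin k)) :
    Function.Injective (fun (a : Fin k → ℕ) => (fun i => a (π i))) := by
  intro a b h
  funext j
  have := congrFun h (π.symm j)
  simpa using this

lemma vcount_perm (E : Fin k → Finset ℕ) (π : Equiv.Perm (Fin k)) :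
    vcount n k E = vcount n k (fun i => E (π i)) := by
  classical
  apply Nat.card_congr
  refine Equiv.ofBijective (fun vp => ⟨resort (fun x i => vp.1 x (π i)), ?_, ?_⟩) ⟨?_, ?_⟩
  · -- marginals
    intro i
    have h1 := marg_of_map_eq (resort_map (fun x i => vp.1 x (π i))) i
    rw [h1]
    exact vp.2.1 (π i)
  · exact resort_mono _
  · -- injective
    rintro ⟨v, hv⟩ ⟨w, hw⟩ h
    have h1 : resort (fun x i => v x (π i)) = resort (fun x i => w x (π i)) :=
      congrArg Subtype.val h
    have h2 : Multiset.map (fun x => (fun i => v x (π i))) Finset.univ.val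
        = Multiset.map (fun x => (fun i => w x (π i))) Finset.univ.val := by
      rw [← resort_map (fun x i => v x (π i)), ← resort_map (fun x i => w x (π i)), h1]
    have h3 : Multiset.map v Finset.univ.val = Multiset.map w Finset.univ.val := by
      apply Multiset.map_injective (precomp_inj π)
      rw [Multiset.map_map, Multiset.map_map]
      exact h2
    exact Subtype.ext (vec_unique hv.2 hw.2 h3)
  · -- surjective
    rintro ⟨w, hw, hwm⟩
    refine ⟨⟨resort (fun x i => w x (π.symm i)), fun i => ?_, resort_mono _⟩, ?_⟩
    · have h1 := marg_of_map_eq (resort_map (fun x i => w x (π.symm i))) i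
      rw [h1]
      have h2 := hw (π.symm i)
      simp only [Equiv.apply_symm_apply] at h2
      exact h2
    · apply Subtype.ext
      show resort (fun x i => resort (fun x' i' => w x' (π.symm i')) x (π i)) = w
      apply vec_unique (resort_mono _) hwm
      rw [resort_map]
      have h1 : (fun x => (fun i => resort (fun x' i' => w x' (π.symm i')) x (π i)))
          = (fun a : Fin k → ℕ => (fun i => a (π i))) ∘ (resort (fun x' i' => w x' (π.symm i'))) := rfl
      rw [h1, ← Multiset.map_map, resort_map]
      have h2 : (fun x => (fun i' => w x (π.symm i')))
          = (fun a : Fin k → ℕ => (fun i => a (π.symm i))) ∘ w := rfl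
      rw [h2, ← Multiset.map_map, Multiset.map_map]
      have h3 : ((fun a : Fin k → ℕ => (fun i => a (π i))) ∘
          (fun a : Fin k → ℕ => (fun i => a (π.symm i)))) = id := by
        funext a
        funext i
        simp
      rw [h3, Multiset.map_id]

lemma fcount_perm (E : Fin k → Finset ℕ) (π : Equiv.Perm (Fin k)) :
    fcount n k E = fcount n k (fun i => E (π i)) := by
  rw [card_subset_eq, card_subset_eq, vcount_perm E π]

noncomputable def gcount (n k : ℕ) (E : Fin k → Finset ℕ) : ℕ :=
  Nat.card {σ : Fin k → Equiv.Perm (Fin n) //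
    (List.ofFn σ).prod = 1 ∧ ∀ i, permDes (σ i) = E i}

open Finset Classical in
lemma fcount_eq_sum (E : Fin k → Finset ℕ) :
    fcount n k E = ∑ F ∈ Fintype.piFinset (fun i => (E i).powerset), gcount n k F := by
  rw [fcount, Nat.card_eq_fintype_card, Fintype.card_subtype]
  rw [Finset.card_eq_sum_card_fiberwise
    (f := fun σ : Fin k → Equiv.Perm (Fin n) => fun i => permDes (σ i))
    (t := Fintype.piFinset (fun i => (E i).powerset)) ?hmem]
  case hmem =>
    intro σ hσ
    rw [Finset.mem_coe, Finset.mem_filter] at hσ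
    rw [Finset.mem_coe, Fintype.mem_piFinset]
    intro i
    rw [Finset.mem_powerset]
    exact hσ.2.2 i
  apply Finset.sum_congr rfl
  intro F hF
  rw [gcount, Nat.card_eq_fintype_card, Fintype.card_subtype]
  congr 1
  ext σ
  simp only [Finset.mem_filter, Finset.mem_univ, true_and]
  constructor
  · rintro ⟨⟨h1, _⟩, h3⟩
    exact ⟨h1, fun i => congrFun h3 i⟩
  · rintro ⟨h1, h2⟩
    refine ⟨⟨h1, fun i => ?_⟩, funext h2⟩
    rw [h2 i]
    exact Finset.mem_powerset.1 (Fintype.mem_piFinset.1 hF i)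

open Finset Classical in
lemma gcount_perm (π : Equiv.Perm (Fin k)) :
    ∀ (N : ℕ) (E : Fin k → Finset ℕ), (∑ i, (E i).card) ≤ N →
      gcount n k E = gcount n k (fun i => E (π i)) := by
  intro N
  induction N with
  | zero =>
    intro E hE
    have h0 : ∀ i, E i = ∅ := by
      intro i
      rw [← Finset.card_eq_zero]
      have h1 := Finset.single_le_sum (f := fun i => (E i).card) (fun i _ => Nat.zero_le _)
        (Finset.mem_univ i)
      omega
    have : (fun i => E (π i)) = E := by
      funext i
      rw [h0 (π i), h0 i]
    rw [this]
  | succ N ih =>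
    intro E hE
    have hEmem : E ∈ Fintype.piFinset (fun i => (E i).powerset) := by
      rw [Fintype.mem_piFinset]
      intro i
      exact Finset.mem_powerset.2 (le_refl _)
    have hEmem' : (fun i => E (π i)) ∈ Fintype.piFinset (fun i => (E (π i)).powerset) := by
      rw [Fintype.mem_piFinset]
      intro i
      exact Finset.mem_powerset.2 (le_refl _)
    have key1 := Finset.sum_erase_add (Fintype.piFinset (fun i => (E i).powerset))
      (gcount n k) hEmem
    have key2 := Finset.sum_erase_add (Fintype.piFinset (fun i => (E (π i)).powerset))
      (gcount n k) hEmem'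
    rw [← fcount_eq_sum] at key1
    rw [← fcount_eq_sum (fun i => E (π i))] at key2
    have hsum : ∑ F ∈ (Fintype.piFinset (fun i => (E i).powerset)).erase E, gcount n k F
        = ∑ F ∈ (Fintype.piFinset (fun i => (E (π i)).powerset)).erase (fun i => E (π i)),
            gcount n k F := by
      apply Finset.sum_nbij' (i := fun F => fun j => F (π j)) (j := fun F => fun j => F (π.symm j))
      · intro F hF
        rw [Finset.mem_erase] at hF ⊢
        constructor
        · intro hcontra
          apply hF.1
          funext j
          have := congrFun hcontra (π.symm j)
          simpa using this
        · rw [Fintype.mem_piFinset] at hF ⊢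
          intro i
          exact hF.2 (π i)
      · intro F hF
        rw [Finset.mem_erase] at hF ⊢
        constructor
        · intro hcontra
          apply hF.1
          funext j
          have := congrFun hcontra (π j)
          simpa using this
        · rw [Fintype.mem_piFinset] at hF ⊢
          intro i
          have := hF.2 (π.symm i)
          simpa using this
      · intro F _
        funext j
        simp
      · intro F _
        funext j
        simp
      · intro F hF
        rw [Finset.mem_erase, Fintype.mem_piFinset] at hF
        apply ih
        have hlt : ∑ i, (F i).card < ∑ i, (E i).card := by
          apply Finset.sum_lt_sum
          · intro i _
            exact Finset.card_le_card (Finset.mem_powerset.1 (hF.2 i))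
          · have hne : ∃ i, F i ≠ E i := by
              by_contra hno
              push_neg at hno
              exact hF.1 (funext hno)
            obtain ⟨i, hi⟩ := hne
            exact ⟨i, Finset.mem_univ i, Finset.card_lt_card
              (lt_of_le_of_ne (Finset.mem_powerset.1 (hF.2 i)) hi)⟩
        omega
    have hf : fcount n k E = fcount n k (fun i => E (π i)) := fcount_perm E π
    omega
end Stmt11

/-- For any descent sets `D_1, …, D_k ⊆ [n-1]` and any permutation `π` of `{1, …, k}`,
the number of `k`-tuples `(σ_1, …, σ_k)` with `σ_1 ⋯ σ_k = 1` and `Des(σ_i) = D_i`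
equals the number of such tuples with `Des(σ_i) = D_{π(i)}`. -/
theorem stmt11 (n k : ℕ) (D : Fin k → Finset ℕ) (π : Equiv.Perm (Fin k)) :
    Nat.card {σ : Fin k → Equiv.Perm (Fin n) //
        (List.ofFn σ).prod = 1 ∧ ∀ i, permDes (σ i) = D i} =
      Nat.card {σ : Fin k → Equiv.Perm (Fin n) //
        (List.ofFn σ).prod = 1 ∧ ∀ i, permDes (σ i) = D (π i)} := by
  have := Stmt11.gcount_perm (n := n) π (∑ i, (D i).card) D le_rfl
  simpa [Stmt11.gcount] using this
end
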